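/- arXiv:2306.14892 — 7 statements merged into one kernel-verified Lean document; each statement's English description precedes it below -/
import Mathlib

section
/- (Compliance lemma; Lemma 1 of the paper.) Let g be a compliant dataset-generation rule and let D = (s_i, a_i, s'_i, r_i)_{i=1}^n be an in-context dataset satisfying ∏_{i=1}^n g(s_i, a_i | D_{i−1}) > 0 and Σ_{τ'} λ(τ') L_{τ'}(D) > 0. Then for every task τ ∈ T, the posterior over tasks induced by the compliant dataset likelihood equals the posterior-sampling posterior: λ(τ) D^g(D; τ) / (Σ_{τ'} λ(τ') D^g(D; τ')) = w(τ | D). -/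
open scoped BigOperators

/-- An in-context dataset entry `(s, a, s', r)`. -/
abbrev Entry (S A Rw : Type*) := S × A × S × Rw

variable {T S A Rw : Type*}

/-- Environment likelihood `L_τ(D) = ∏ᵢ P_τ(s'ᵢ | sᵢ, aᵢ) · R_τ(rᵢ | sᵢ, aᵢ)`. -/
noncomputable def envLik (Pk : T → S → A → PMF S) (Rk : T → S → A → PMF Rw)
    (τ : T) (D : List (Entry S A Rw)) : ℝ :=
  (D.map fun e => (Pk τ e.1 e.2.1 e.2.2.1).toReal * (Rk τ e.1 e.2.1 e.2.2.2).toReal).prod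

/-- Posterior-sampling posterior `w(τ | D) = λ(τ) L_τ(D) / Σ_{τ'} λ(τ') L_{τ'}(D)`
(with the convention `x / 0 = 0`, built into real division). -/
noncomputable def psPost [Fintype T] (Pk : T → S → A → PMF S) (Rk : T → S → A → PMF Rw)
    (prior : PMF T) (D : List (Entry S A Rw)) (τ : T) : ℝ :=
  (prior τ).toReal * envLik Pk Rk τ D /
    ∑ τ' : T, (prior τ').toReal * envLik Pk Rk τ' D

/-- Dataset likelihood induced by a compliant dataset-generation rule `g`
(a task-independent PMF over `(s, a)` for each dataset prefix):
`D^g(D; τ) = ∏ᵢ g(sᵢ, aᵢ | D_{i-1}) · P_τ(s'ᵢ | sᵢ, aᵢ) · R_τ(rᵢ | sᵢ, aᵢ)`. -/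
noncomputable def gLik (Pk : T → S → A → PMF S) (Rk : T → S → A → PMF Rw)
    (g : List (Entry S A Rw) → PMF (S × A)) (τ : T) (D : List (Entry S A Rw)) : ℝ :=
  ∏ i : Fin D.length,
    ((g (D.take i) ((D.get i).1, (D.get i).2.1)).toReal *
      ((Pk τ (D.get i).1 (D.get i).2.1 (D.get i).2.2.1).toReal *
        (Rk τ (D.get i).1 (D.get i).2.1 (D.get i).2.2.2).toReal))

lemma gLik_eq (Pk : T → S → A → PMF S) (Rk : T → S → A → PMF Rw)
    (g : List (Entry S A Rw) → PMF (S × A)) (τ : T) (D : List (Entry S A Rw)) :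
    gLik Pk Rk g τ D =
      (∏ i : Fin D.length, (g (D.take i) ((D.get i).1, (D.get i).2.1)).toReal) *
        envLik Pk Rk τ D := by
  rw [gLik, envLik, Finset.prod_mul_distrib]
  congr 1
  exact Fin.prod_univ_fun_getElem D (fun e => (Pk τ e.1 e.2.1 e.2.2.1).toReal * (Rk τ e.1 e.2.1 e.2.2.2).toReal)

/-- **Compliance lemma (Lemma 1).** If the compliant factors of the dataset `D` are positive,
`∏ᵢ g(sᵢ, aᵢ | D_{i-1}) > 0`, and `Σ_{τ'} λ(τ') L_{τ'}(D) > 0`, then for every task `τ` the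
posterior over tasks induced by the compliant dataset likelihood coincides with the
posterior-sampling posterior:
`λ(τ) D^g(D; τ) / (Σ_{τ'} λ(τ') D^g(D; τ')) = w(τ | D)`. -/
theorem compliance_lemma
    [Fintype T] [Nonempty T] [Fintype S] [Nonempty S] [Fintype A] [Nonempty A]
    [Fintype Rw] [Nonempty Rw]
    (Pk : T → S → A → PMF S) (Rk : T → S → A → PMF Rw) (prior : PMF T)
    (g : List (Entry S A Rw) → PMF (S × A)) (D : List (Entry S A Rw))
    (hg : 0 < ∏ i : Fin D.length, (g (D.take i) ((D.get i).1, (D.get i).2.1)).toReal)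
    (hD : 0 < ∑ τ' : T, (prior τ').toReal * envLik Pk Rk τ' D) :
    ∀ τ : T,
      (prior τ).toReal * gLik Pk Rk g τ D /
          (∑ τ' : T, (prior τ').toReal * gLik Pk Rk g τ' D) =
        psPost Pk Rk prior D τ := by
  intro τ
  set C := ∏ i : Fin D.length, (g (D.take i) ((D.get i).1, (D.get i).2.1)).toReal with hC
  have h1 : ∀ τ' : T, (prior τ').toReal * gLik Pk Rk g τ' D =
      C * ((prior τ').toReal * envLik Pk Rk τ' D) := by
    intro τ'; rw [gLik_eq]; ring
  rw [psPost, h1, Finset.sum_congr rfl (fun τ' _ => h1 τ'), ← Finset.mul_sum,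
    mul_div_mul_left _ _ hg.ne']
end

section
/- (Theorem 1: DPT is equivalent to posterior sampling.) Suppose Σ_{τ'} λ(τ') L_{τ'}(D) > 0 and that for every h ∈ {1,…,H} the length-(h−1) prefix ξ_{h−1} of the trajectory ξ_H satisfies Σ_τ w(τ | D) W_{h−1}(τ) > 0. Then P_ps(ξ_H | D, τ_c) = P_M(ξ_H | D, τ_c); that is, the distribution over length-H trajectories generated in test task τ_c by posterior sampling (sample τ ~ w(· | D), then execute π*_τ with transitions given by P_{τ_c}) coincides with the distribution generated by sampling each action from the DPT conditional M given the dataset D and the history so far. -/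
open scoped BigOperators

variable {T S A Rw : Type*}

/-- Prefix weight `W_h(τ) = ∏ᵢ π*_τ(aᵢ | sᵢ)` of a history `ξ_h` (equal to `1` if `h = 0`). -/
noncomputable def histW (πs : T → S → PMF A) (τ : T) (ξ : List (S × A)) : ℝ :=
  (ξ.map fun p => (πs τ p.1 p.2).toReal).prod

/-- DPT conditional action distribution
`M(a | s, D, ξ) = (Σ_τ w(τ|D) W(τ) π*_τ(a|s)) / (Σ_τ w(τ|D) W(τ))` (with `x / 0 = 0`). -/
noncomputable def dptM [Fintype T] (Pk : T → S → A → PMF S) (Rk : T → S → A → PMF Rw)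
    (πs : T → S → PMF A) (prior : PMF T)
    (D : List (Entry S A Rw)) (ξ : List (S × A)) (s : S) (a : A) : ℝ :=
  (∑ τ : T, psPost Pk Rk prior D τ * histW πs τ ξ * (πs τ s a).toReal) /
    (∑ τ : T, psPost Pk Rk prior D τ * histW πs τ ξ)

/-- Probability `ρ(s₁)` of the initial state of a trajectory (`1` for the empty trajectory). -/
noncomputable def initProb (ρ : PMF S) : List (S × A) → ℝ
  | [] => 1
  | p :: _ => (ρ p.1).toReal

/-- Product of test-task transition probabilities `∏_{h=1}^{H-1} P_{τc}(s_{h+1} | s_h, a_h)`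
along a trajectory. -/
noncomputable def transProd (Pk : T → S → A → PMF S) (τc : T) : List (S × A) → ℝ
  | [] => 1
  | [_] => 1
  | (s, a) :: p :: rest => (Pk τc s a p.1).toReal * transProd Pk τc (p :: rest)

/-- Trajectory probability under posterior sampling:
`P_ps(ξ_H | D, τc) = (Σ_τ w(τ|D) ∏_h π*_τ(a_h|s_h)) · ρ(s₁) · ∏_{h<H} P_{τc}(s_{h+1}|s_h,a_h)`. -/
noncomputable def trajPs [Fintype T] (Pk : T → S → A → PMF S) (Rk : T → S → A → PMF Rw)
    (πs : T → S → PMF A) (prior : PMF T) (τc : T) (ρ : PMF S)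
    (D : List (Entry S A Rw)) (ξ : List (S × A)) : ℝ :=
  (∑ τ : T, psPost Pk Rk prior D τ * histW πs τ ξ) * initProb ρ ξ * transProd Pk τc ξ

/-- Trajectory probability under the DPT rollout:
`P_M(ξ_H | D, τc) = ρ(s₁) · ∏_h M(a_h | s_h, D, ξ_{h-1}) · ∏_{h<H} P_{τc}(s_{h+1}|s_h,a_h)`. -/
noncomputable def trajM [Fintype T] (Pk : T → S → A → PMF S) (Rk : T → S → A → PMF Rw)
    (πs : T → S → PMF A) (prior : PMF T) (τc : T) (ρ : PMF S)
    (D : List (Entry S A Rw)) (ξ : List (S × A)) : ℝ :=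
  initProb ρ ξ *
    (∏ i : Fin ξ.length,
      dptM Pk Rk πs prior D (ξ.take i) (ξ.get i).1 (ξ.get i).2) *
    transProd Pk τc ξ


lemma histW_nil (πs : T → S → PMF A) (τ : T) : histW πs τ [] = 1 := rfl

lemma histW_append_singleton (πs : T → S → PMF A) (τ : T) (ξ : List (S × A)) (p : S × A) :
    histW πs τ (ξ ++ [p]) = histW πs τ ξ * (πs τ p.1 p.2).toReal := by
  simp [histW]

lemma prod_dptM_aux [Fintype T] (Pk : T → S → A → PMF S) (Rk : T → S → A → PMF Rw)
    (πs : T → S → PMF A) (prior : PMF T) (D : List (Entry S A Rw)) :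
    ∀ (ξ pre : List (S × A)),
      (∀ h : ℕ, h < ξ.length →
        0 < ∑ τ : T, psPost Pk Rk prior D τ * histW πs τ (pre ++ ξ.take h)) →
      (∏ i : Fin ξ.length,
          dptM Pk Rk πs prior D (pre ++ ξ.take i) (ξ.get i).1 (ξ.get i).2) *
        (∑ τ : T, psPost Pk Rk prior D τ * histW πs τ pre) =
      ∑ τ : T, psPost Pk Rk prior D τ * histW πs τ (pre ++ ξ) := by
  intro ξ
  induction ξ with
  | nil => intro pre _; simp
  | cons p ξ ih =>
    intro pre hpre
    have h0 : 0 < ∑ τ : T, psPost Pk Rk prior D τ * histW πs τ pre := by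
      simpa using hpre 0 (Nat.succ_pos _)
    have hstep :
        dptM Pk Rk πs prior D pre p.1 p.2 *
          (∑ τ : T, psPost Pk Rk prior D τ * histW πs τ pre) =
        ∑ τ : T, psPost Pk Rk prior D τ * histW πs τ (pre ++ [p]) := by
      rw [dptM, div_mul_eq_mul_div, mul_div_assoc, div_self h0.ne', mul_one]
      simp [histW_append_singleton, mul_assoc]
    have hIH := ih (pre ++ [p]) (by
      intro h hh
      have := hpre (h + 1) (by simpa using Nat.succ_lt_succ hh)
      simpa [List.append_assoc] using this)
    calc (∏ i : Fin (p :: ξ).length,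
            dptM Pk Rk πs prior D (pre ++ (p :: ξ).take i) ((p :: ξ).get i).1
              ((p :: ξ).get i).2) *
          (∑ τ : T, psPost Pk Rk prior D τ * histW πs τ pre)
        = (∏ i : Fin ξ.length,
            dptM Pk Rk πs prior D ((pre ++ [p]) ++ ξ.take i) (ξ.get i).1 (ξ.get i).2) *
          (dptM Pk Rk πs prior D pre p.1 p.2 *
            (∑ τ : T, psPost Pk Rk prior D τ * histW πs τ pre)) := by
          simp only [List.length_cons]
          rw [Fin.prod_univ_succ]
          simp only [Fin.val_succ, Fin.val_zero, List.take_succ_cons, List.take_zero,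
            List.append_nil, List.get_eq_getElem, List.getElem_cons_succ, List.getElem_cons_zero, List.append_assoc,
            List.singleton_append]
          ring
      _ = (∏ i : Fin ξ.length,
            dptM Pk Rk πs prior D ((pre ++ [p]) ++ ξ.take i) (ξ.get i).1 (ξ.get i).2) *
          (∑ τ : T, psPost Pk Rk prior D τ * histW πs τ (pre ++ [p])) := by rw [hstep]
      _ = ∑ τ : T, psPost Pk Rk prior D τ * histW πs τ ((pre ++ [p]) ++ ξ) := hIH
      _ = ∑ τ : T, psPost Pk Rk prior D τ * histW πs τ (pre ++ p :: ξ) := by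
          simp [List.append_assoc]

lemma sum_psPost_eq_one [Fintype T] (Pk : T → S → A → PMF S) (Rk : T → S → A → PMF Rw)
    (prior : PMF T) (D : List (Entry S A Rw))
    (hD : 0 < ∑ τ' : T, (prior τ').toReal * envLik Pk Rk τ' D) :
    ∑ τ : T, psPost Pk Rk prior D τ = 1 := by
  simp only [psPost]
  rw [← Finset.sum_div, div_self hD.ne']

/-- **Theorem 1 (DPT ⟺ posterior sampling).** If `Σ_{τ'} λ(τ') L_{τ'}(D) > 0` and for every
`h ∈ {1, …, H}` the length-`(h-1)` prefix `ξ_{h-1}` of `ξ_H` satisfies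
`Σ_τ w(τ|D) W_{h-1}(τ) > 0`, then `P_ps(ξ_H | D, τ_c) = P_M(ξ_H | D, τ_c)`. -/
theorem dpt_equals_posterior_sampling
    [Fintype T] [Nonempty T] [Fintype S] [Nonempty S] [Fintype A] [Nonempty A]
    [Fintype Rw] [Nonempty Rw]
    (Pk : T → S → A → PMF S) (Rk : T → S → A → PMF Rw) (πs : T → S → PMF A)
    (prior : PMF T) (τc : T) (ρ : PMF S) (D : List (Entry S A Rw))
    (H : ℕ) (hH : 1 ≤ H) (ξ : List (S × A)) (hξ : ξ.length = H)
    (hD : 0 < ∑ τ' : T, (prior τ').toReal * envLik Pk Rk τ' D)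
    (hpre : ∀ h : ℕ, h < H →
      0 < ∑ τ : T, psPost Pk Rk prior D τ * histW πs τ (ξ.take h)) :
    trajPs Pk Rk πs prior τc ρ D ξ = trajM Pk Rk πs prior τc ρ D ξ := by
  have haux := prod_dptM_aux Pk Rk πs prior D ξ []
    (by intro h hh; simpa using hpre h (hξ ▸ hh))
  simp only [List.nil_append, histW_nil, mul_one,
    sum_psPost_eq_one Pk Rk prior D hD, mul_one] at haux
  rw [trajPs, trajM, ← haux]
  ring
end

section
/- (Proposition 2: invariance of DPT to compliant pretraining dataset distributions.) Let g¹ and g² be two compliant dataset-generation rules with identical support, i.e., for every dataset prefix D_{i−1} and every (s, a, s', r) the corresponding factors satisfy g¹(s, a | D_{i−1}) > 0 if and only if g²(s, a | D_{i−1}) > 0. Let P¹_pre and P²_pre denote the pretraining joint distributions built from the same prior λ, the same full-support D_query and 𝔖_h, and the same optimal policies π*, but with in-context dataset rules g¹ and g² respectively. Then for all a* ∈ A, s_query ∈ S, datasets D, and histories ξ_h such that the event (s_query, D, ξ_h) has positive probability under both joints, the conditional distributions of the optimal-action label agree: P¹_pre(a* | s_query, D, ξ_h) = P²_pre(a* |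 s_query, D, ξ_h). -/
open scoped BigOperators ENNReal NNReal

variable {T S A Rw : Type*}

/-- Pretraining joint distribution
`P_pre(τ, a*, s_query, D, ξ_h) = λ(τ) · D^g(D;τ) · D_query(s_query) · 𝔖_h(s_{1:h})
  · π*_τ(a*|s_query) · ∏ᵢ π*_τ(aᵢ|sᵢ)`,
where `SSeq h` is the state-sequence distribution `𝔖_h` on sequences of length `h`. -/
noncomputable def preJoint [Fintype T] (Pk : T → S → A → PMF S) (Rk : T → S → A → PMF Rw)
    (πs : T → S → PMF A) (prior : PMF T)
    (g : List (Entry S A Rw) → PMF (S × A)) (Dq : PMF S) (SSeq : ℕ → List S → ℝ≥0∞)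
    (τ : T) (astar : A) (squery : S) (D : List (Entry S A Rw)) (ξ : List (S × A)) : ℝ :=
  (prior τ).toReal * gLik Pk Rk g τ D * (Dq squery).toReal *
    (SSeq ξ.length (ξ.map Prod.fst)).toReal * (πs τ squery astar).toReal * histW πs τ ξ

/-- **Proposition 2 (invariance of DPT to compliant pretraining dataset distributions).**
If `g¹` and `g²` are compliant dataset-generation rules with identical support, and the
pretraining joints `P¹_pre`, `P²_pre` are built from the same prior `λ`, the same full-support
`D_query` and `𝔖_h`, and the same optimal policies `π*`, then for every `a*`, `s_query`, `D`,
`ξ_h` such that the event `(s_query, D, ξ_h)` has positive probability under both joints,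
`P¹_pre(a* | s_query, D, ξ_h) = P²_pre(a* | s_query, D, ξ_h)`. -/
theorem dpt_invariant_to_compliant_dataset_distribution
    [Fintype T] [Nonempty T] [Fintype S] [Nonempty S] [Fintype A] [Nonempty A]
    [Fintype Rw] [Nonempty Rw]
    (Pk : T → S → A → PMF S) (Rk : T → S → A → PMF Rw) (πs : T → S → PMF A)
    (prior : PMF T)
    (g1 g2 : List (Entry S A Rw) → PMF (S × A))
    (hsupp : ∀ (D' : List (Entry S A Rw)) (s : S) (a : A),
      g1 D' (s, a) ≠ 0 ↔ g2 D' (s, a) ≠ 0)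
    (Dq : PMF S) (hDq : ∀ s : S, Dq s ≠ 0)
    (SSeq : ℕ → List S → ℝ≥0∞)
    (hSpos : ∀ (h : ℕ) (l : List S), l.length = h → SSeq h l ≠ 0)
    (hSnorm : ∀ h : ℕ, ∑' l : {l : List S // l.length = h}, SSeq h l.val = 1)
    (astar : A) (squery : S) (D : List (Entry S A Rw)) (ξ : List (S × A))
    (hpos1 : 0 < ∑ τ : T, ∑ a : A, preJoint Pk Rk πs prior g1 Dq SSeq τ a squery D ξ)
    (hpos2 : 0 < ∑ τ : T, ∑ a : A, preJoint Pk Rk πs prior g2 Dq SSeq τ a squery D ξ) :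
    (∑ τ : T, preJoint Pk Rk πs prior g1 Dq SSeq τ astar squery D ξ) /
        (∑ τ : T, ∑ a : A, preJoint Pk Rk πs prior g1 Dq SSeq τ a squery D ξ) =
      (∑ τ : T, preJoint Pk Rk πs prior g2 Dq SSeq τ astar squery D ξ) /
        (∑ τ : T, ∑ a : A, preJoint Pk Rk πs prior g2 Dq SSeq τ a squery D ξ) := by
  classical
  set C1 : ℝ := ∏ i : Fin D.length,
    (g1 (D.take i) ((D.get i).1, (D.get i).2.1)).toReal with hC1
  set C2 : ℝ := ∏ i : Fin D.length,
    (g2 (D.take i) ((D.get i).1, (D.get i).2.1)).toReal with hC2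
  set F : T → A → ℝ := fun τ a =>
    (prior τ).toReal *
      (∏ i : Fin D.length,
        ((Pk τ (D.get i).1 (D.get i).2.1 (D.get i).2.2.1).toReal *
          (Rk τ (D.get i).1 (D.get i).2.1 (D.get i).2.2.2).toReal)) *
      (Dq squery).toReal * (SSeq ξ.length (ξ.map Prod.fst)).toReal *
      (πs τ squery a).toReal * histW πs τ ξ with hF
  have h1 : ∀ τ a, preJoint Pk Rk πs prior g1 Dq SSeq τ a squery D ξ = C1 * F τ a := by
    intro τ a
    simp only [preJoint, gLik, hF, hC1, Finset.prod_mul_distrib]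
    ring
  have h2 : ∀ τ a, preJoint Pk Rk πs prior g2 Dq SSeq τ a squery D ξ = C2 * F τ a := by
    intro τ a
    simp only [preJoint, gLik, hF, hC2, Finset.prod_mul_distrib]
    ring
  have e1 : (∑ τ : T, preJoint Pk Rk πs prior g1 Dq SSeq τ astar squery D ξ)
      = C1 * ∑ τ : T, F τ astar := by
    rw [Finset.mul_sum]; exact Finset.sum_congr rfl fun τ _ => h1 τ astar
  have e2 : (∑ τ : T, preJoint Pk Rk πs prior g2 Dq SSeq τ astar squery D ξ)
      = C2 * ∑ τ : T, F τ astar := by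
    rw [Finset.mul_sum]; exact Finset.sum_congr rfl fun τ _ => h2 τ astar
  have e1' : (∑ τ : T, ∑ a : A, preJoint Pk Rk πs prior g1 Dq SSeq τ a squery D ξ)
      = C1 * ∑ τ : T, ∑ a : A, F τ a := by
    rw [Finset.mul_sum]
    refine Finset.sum_congr rfl fun τ _ => ?_
    rw [Finset.mul_sum]; exact Finset.sum_congr rfl fun a _ => h1 τ a
  have e2' : (∑ τ : T, ∑ a : A, preJoint Pk Rk πs prior g2 Dq SSeq τ a squery D ξ)
      = C2 * ∑ τ : T, ∑ a : A, F τ a := by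
    rw [Finset.mul_sum]
    refine Finset.sum_congr rfl fun τ _ => ?_
    rw [Finset.mul_sum]; exact Finset.sum_congr rfl fun a _ => h2 τ a
  rw [e1, e1', e2, e2']
  have hc1 : C1 ≠ 0 := by
    intro h; rw [e1', h, zero_mul] at hpos1; exact lt_irrefl 0 hpos1
  have hc2 : C2 ≠ 0 := by
    intro h; rw [e2', h, zero_mul] at hpos2; exact lt_irrefl 0 hpos2
  rw [mul_div_mul_left _ _ hc1, mul_div_mul_left _ _ hc2]
end

section
/- (Invariance of the task posterior; intermediate claim in the proof of Proposition 2.) Let g¹ and g² be two compliant dataset-generation rules with identical support, i.e., for every dataset prefix D_{i−1} and every (s, a), g¹(s, a | D_{i−1}) > 0 if and only if g²(s, a | D_{i−1}) > 0. Let P¹_pre and P²_pre denote the pretraining joint distributions built from the same prior λ, the same full-support D_query and 𝔖_h, and the same optimal policies π*, but with in-context dataset rules g¹ and g² respectively. Then for all τ ∈ T, s_query ∈ S, datasets D, and histories ξ_h such that the event (s_query, D, ξ_h) has positive probability under both joints, the conditional task posteriors agree: P¹_pre(τ | s_query, D, ξ_h) = P²_pre(τ | s_query, D, ξ_h). -/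
open scoped BigOperators ENNReal NNReal

variable {T S A Rw : Type*}

/-- **Invariance of the task posterior** (intermediate claim in the proof of Proposition 2).
If `g¹` and `g²` are compliant dataset-generation rules with identical support, and the
pretraining joints `P¹_pre`, `P²_pre` are built from the same prior `λ`, the same full-support
`D_query` and `𝔖_h`, and the same optimal policies `π*`, then for every `τ`, `s_query`, `D`,
`ξ_h` such that the event `(s_query, D, ξ_h)` has positive probability under both joints,
the conditional task posteriors agree:
`P¹_pre(τ | s_query, D, ξ_h) = P²_pre(τ | s_query, D, ξ_h)`. -/
theorem task_posterior_invariant_to_compliant_dataset_distribution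
    [Fintype T] [Nonempty T] [Fintype S] [Nonempty S] [Fintype A] [Nonempty A]
    [Fintype Rw] [Nonempty Rw]
    (Pk : T → S → A → PMF S) (Rk : T → S → A → PMF Rw) (πs : T → S → PMF A)
    (prior : PMF T)
    (g1 g2 : List (Entry S A Rw) → PMF (S × A))
    (hsupp : ∀ (D' : List (Entry S A Rw)) (s : S) (a : A),
      g1 D' (s, a) ≠ 0 ↔ g2 D' (s, a) ≠ 0)
    (Dq : PMF S) (hDq : ∀ s : S, Dq s ≠ 0)
    (SSeq : ℕ → List S → ℝ≥0∞)
    (hSpos : ∀ (h : ℕ) (l : List S), l.length = h → SSeq h l ≠ 0)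
    (hSnorm : ∀ h : ℕ, ∑' l : {l : List S // l.length = h}, SSeq h l.val = 1)
    (squery : S) (D : List (Entry S A Rw)) (ξ : List (S × A))
    (hpos1 : 0 < ∑ τ : T, ∑ a : A, preJoint Pk Rk πs prior g1 Dq SSeq τ a squery D ξ)
    (hpos2 : 0 < ∑ τ : T, ∑ a : A, preJoint Pk Rk πs prior g2 Dq SSeq τ a squery D ξ) :
    ∀ τ : T,
      (∑ a : A, preJoint Pk Rk πs prior g1 Dq SSeq τ a squery D ξ) /
          (∑ τ' : T, ∑ a : A, preJoint Pk Rk πs prior g1 Dq SSeq τ' a squery D ξ) =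
        (∑ a : A, preJoint Pk Rk πs prior g2 Dq SSeq τ a squery D ξ) /
          (∑ τ' : T, ∑ a : A, preJoint Pk Rk πs prior g2 Dq SSeq τ' a squery D ξ) := by
  classical
  set c : (List (Entry S A Rw) → PMF (S × A)) → ℝ := fun g =>
    ∏ i : Fin D.length, (g (D.take i) ((D.get i).1, (D.get i).2.1)).toReal with hc
  set F : T → A → ℝ := fun τ a =>
    (prior τ).toReal *
      (∏ i : Fin D.length,
        ((Pk τ (D.get i).1 (D.get i).2.1 (D.get i).2.2.1).toReal *
          (Rk τ (D.get i).1 (D.get i).2.1 (D.get i).2.2.2).toReal)) *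
      (Dq squery).toReal * (SSeq ξ.length (ξ.map Prod.fst)).toReal *
      (πs τ squery a).toReal * histW πs τ ξ with hF
  have hfac : ∀ g τ a, preJoint Pk Rk πs prior g Dq SSeq τ a squery D ξ = c g * F τ a := by
    intro g τ a
    simp only [preJoint, gLik, hc, hF, Finset.prod_mul_distrib]
    ring
  have hsum : ∀ g τ, (∑ a : A, preJoint Pk Rk πs prior g Dq SSeq τ a squery D ξ)
      = c g * ∑ a : A, F τ a := by
    intro g τ
    rw [Finset.mul_sum]
    exact Finset.sum_congr rfl fun a _ => hfac g τ a
  have hsum2 : ∀ g, (∑ τ : T, ∑ a : A, preJoint Pk Rk πs prior g Dq SSeq τ a squery D ξ)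
      = c g * ∑ τ : T, ∑ a : A, F τ a := by
    intro g
    rw [Finset.mul_sum]
    exact Finset.sum_congr rfl fun τ _ => hsum g τ
  have h1 : c g1 ≠ 0 := by
    intro h
    rw [hsum2, h, zero_mul] at hpos1
    exact lt_irrefl 0 hpos1
  have h2 : c g2 ≠ 0 := by
    intro h
    rw [hsum2, h, zero_mul] at hpos2
    exact lt_irrefl 0 hpos2
  intro τ
  rw [hsum, hsum, hsum2, hsum2, mul_div_mul_left _ _ h1, mul_div_mul_left _ _ h2]
end

section
/- (Factorization of the pretraining task posterior; used in the proof of Theorem 1.) Suppose the event (s_query, D, ξ_h) has positive probability under the pretraining joint P_pre. Then the conditional distribution over tasks satisfies, for every τ ∈ T, P_pre(τ | s_query, D, ξ_h) = w(τ | D) W_h(τ) / Σ_{τ'} w(τ' | D) W_h(τ'); in particular it does not depend on the query state s_query, on D_query, on 𝔖_h, or on the compliant rule g. Consequently the conditional distribution of the optimal-action label equals the DPT conditional: P_pre(a* | s_query, D, ξ_h) = (Σ_τ w(τ | D) W_h(τ) π*_τ(a* | s_query)) / (Σ_τ w(τ | D) W_h(τ)) = M(a* | s_query, D, ξ_h).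 -/
open scoped BigOperators ENNReal NNReal

variable {T S A Rw : Type*}

/-- **Factorization of the pretraining task posterior** (used in the proof of Theorem 1).
If the event `(s_query, D, ξ_h)` has positive probability under the pretraining joint
`P_pre`, then for every `τ`,
`P_pre(τ | s_query, D, ξ_h) = w(τ|D) W_h(τ) / Σ_{τ'} w(τ'|D) W_h(τ')`
(in particular independent of `s_query`, `D_query`, `𝔖_h`, and the compliant rule `g`),
and consequently the conditional distribution of the optimal-action label equals the DPT
conditional: `P_pre(a* | s_query, D, ξ_h) = M(a* | s_query, D, ξ_h)`. -/
theorem pretraining_posterior_factorization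
    [Fintype T] [Nonempty T] [Fintype S] [Nonempty S] [Fintype A] [Nonempty A]
    [Fintype Rw] [Nonempty Rw]
    (Pk : T → S → A → PMF S) (Rk : T → S → A → PMF Rw) (πs : T → S → PMF A)
    (prior : PMF T)
    (g : List (Entry S A Rw) → PMF (S × A))
    (Dq : PMF S) (hDq : ∀ s : S, Dq s ≠ 0)
    (SSeq : ℕ → List S → ℝ≥0∞)
    (hSpos : ∀ (h : ℕ) (l : List S), l.length = h → SSeq h l ≠ 0)
    (hSnorm : ∀ h : ℕ, ∑' l : {l : List S // l.length = h}, SSeq h l.val = 1)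
    (squery : S) (D : List (Entry S A Rw)) (ξ : List (S × A))
    (hpos : 0 < ∑ τ : T, ∑ a : A, preJoint Pk Rk πs prior g Dq SSeq τ a squery D ξ) :
    (∀ τ : T,
      (∑ a : A, preJoint Pk Rk πs prior g Dq SSeq τ a squery D ξ) /
          (∑ τ' : T, ∑ a : A, preJoint Pk Rk πs prior g Dq SSeq τ' a squery D ξ) =
        psPost Pk Rk prior D τ * histW πs τ ξ /
          (∑ τ' : T, psPost Pk Rk prior D τ' * histW πs τ' ξ)) ∧
    (∀ astar : A,
      (∑ τ : T, preJoint Pk Rk πs prior g Dq SSeq τ astar squery D ξ) /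
          (∑ τ' : T, ∑ a : A, preJoint Pk Rk πs prior g Dq SSeq τ' a squery D ξ) =
        dptM Pk Rk πs prior D ξ squery astar) := by
  classical
  -- abbreviations
  set G : ℝ := ∏ i : Fin D.length, (g (D.take i) ((D.get i).1, (D.get i).2.1)).toReal with hG
  set C : ℝ := (Dq squery).toReal * (SSeq ξ.length (ξ.map Prod.fst)).toReal with hC
  set E : T → ℝ := fun τ => (prior τ).toReal * envLik Pk Rk τ D * histW πs τ ξ with hE
  set Z : ℝ := ∑ τ' : T, (prior τ').toReal * envLik Pk Rk τ' D with hZ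
  have hglik : ∀ τ : T, gLik Pk Rk g τ D = G * envLik Pk Rk τ D := by
    intro τ
    rw [gLik, Finset.prod_mul_distrib, hG, envLik]
    congr 1
    exact Fin.prod_univ_fun_getElem D (fun e => (Pk τ e.1 e.2.1 e.2.2.1).toReal * (Rk τ e.1 e.2.1 e.2.2.2).toReal)
  have hE_nonneg : ∀ τ : T, 0 ≤ E τ := by
    intro τ
    apply mul_nonneg (mul_nonneg ENNReal.toReal_nonneg _) _
    · exact List.prod_nonneg (by
        intro x hx
        simp only [List.mem_map] at hx
        obtain ⟨e, _, rfl⟩ := hx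
        positivity)
    · exact List.prod_nonneg (by
        intro x hx
        simp only [List.mem_map] at hx
        obtain ⟨e, _, rfl⟩ := hx
        positivity)
  -- sum of π over actions is 1
  have hπsum : ∀ τ : T, ∑ a : A, (πs τ squery a).toReal = 1 := by
    intro τ
    rw [← ENNReal.toReal_sum (fun a _ => PMF.apply_ne_top _ a)]
    rw [← tsum_fintype (L := SummationFilter.unconditional _), (πs τ squery).tsum_coe, ENNReal.toReal_one]
  have hKE : ∀ τ : T, (∑ a : A, preJoint Pk Rk πs prior g Dq SSeq τ a squery D ξ)
      = G * C * E τ := by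
    intro τ
    have : ∀ a : A, preJoint Pk Rk πs prior g Dq SSeq τ a squery D ξ
        = (G * C * E τ) * (πs τ squery a).toReal := by
      intro a
      rw [preJoint, hglik τ, hE, hC]
      ring
    rw [Finset.sum_congr rfl fun a _ => this a, ← Finset.mul_sum, hπsum τ, mul_one]
  have hsum : (∑ τ' : T, ∑ a : A, preJoint Pk Rk πs prior g Dq SSeq τ' a squery D ξ)
      = G * C * ∑ τ' : T, E τ' := by
    rw [Finset.sum_congr rfl fun τ' _ => hKE τ', ← Finset.mul_sum]
  rw [hsum] at hpos
  have hGC : 0 < G * C := by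
    rcases lt_or_ge 0 (G * C) with h | h
    · exact h
    · exfalso
      nlinarith [Finset.sum_nonneg fun τ' (_ : τ' ∈ Finset.univ) => hE_nonneg τ']
  have hSE : 0 < ∑ τ' : T, E τ' := by nlinarith [hpos, hGC]
  have hZne : Z ≠ 0 := by
    intro h0
    have hzero : ∀ τ ∈ Finset.univ, (prior τ).toReal * envLik Pk Rk τ D = 0 := by
      rw [← Finset.sum_eq_zero_iff_of_nonneg]
      · exact h0
      · intro τ _
        apply mul_nonneg ENNReal.toReal_nonneg
        exact List.prod_nonneg (by
          intro x hx
          simp only [List.mem_map] at hx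
          obtain ⟨e, _, rfl⟩ := hx
          exact mul_nonneg ENNReal.toReal_nonneg ENNReal.toReal_nonneg)
    have : ∀ τ : T, E τ = 0 := by
      intro τ
      rw [hE]
      simp only
      rw [hzero τ (Finset.mem_univ τ), zero_mul]
    rw [Finset.sum_congr rfl fun τ _ => this τ] at hSE
    simp at hSE
  have hps : ∀ τ : T, psPost Pk Rk prior D τ * histW πs τ ξ = E τ / Z := by
    intro τ
    rw [psPost, hE, ← hZ]
    ring
  have hpsum : (∑ τ' : T, psPost Pk Rk prior D τ' * histW πs τ' ξ)
      = (∑ τ' : T, E τ') / Z := by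
    rw [Finset.sum_congr rfl fun τ' _ => hps τ', ← Finset.sum_div]
  constructor
  · intro τ
    rw [hsum, hKE τ, hps τ, hpsum]
    rw [mul_div_mul_left _ _ (ne_of_gt hGC)]
    rw [div_div_div_cancel_right₀ hZne]
  · intro astar
    have hnum : (∑ τ : T, preJoint Pk Rk πs prior g Dq SSeq τ astar squery D ξ)
        = G * C * ∑ τ : T, E τ * (πs τ squery astar).toReal := by
      rw [Finset.mul_sum]
      apply Finset.sum_congr rfl
      intro τ _
      rw [preJoint, hglik τ, hE, hC]
      ring
    have hdnum : (∑ τ : T, psPost Pk Rk prior D τ * histW πs τ ξ * (πs τ squery astar).toReal)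
        = (∑ τ : T, E τ * (πs τ squery astar).toReal) / Z := by
      rw [Finset.sum_div]
      apply Finset.sum_congr rfl
      intro τ _
      rw [hps τ]
      ring
    rw [hsum, hnum, dptM, hdnum, hpsum]
    rw [mul_div_mul_left _ _ (ne_of_gt hGC)]
    rw [div_div_div_cancel_right₀ hZne]
end

section
/- (Single-episode value equivalence; consequence of Theorem 1 used in Corollary 1.) Define the mean reward r̄_{τ_c}(s, a) = Σ_{r ∈ R} r · R_{τ_c}(r | s, a) and, for a function Q on trajectories, the expected episode return V(Q) = Σ_{ξ_H ∈ (S×A)^H} Q(ξ_H) · Σ_{h=1}^H r̄_{τ_c}(s_h, a_h). Adopt the convention x/0 = 0 in the definitions of w and M, and assume Σ_{τ'} λ(τ') L_{τ'}(D) > 0. Then the expected return of one episode in the test task τ_c under the DPT rollout equals that under posterior sampling: V(P_M(· | D, τ_c)) = V(P_ps(· | D, τ_c)). -/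
open scoped BigOperators

variable {T S A Rw : Type*}

/-- Mean reward `r̄_{τc}(s, a) = Σ_{r ∈ R} r · R_{τc}(r | s, a)`, where `rval` gives the
real value of each element of the finite reward set. -/
noncomputable def meanReward (Rk : T → S → A → PMF Rw) (rval : Rw → ℝ)
    [Fintype Rw] (τc : T) (s : S) (a : A) : ℝ :=
  ∑ r : Rw, rval r * (Rk τc s a r).toReal

/-- Expected episode return `V(Q) = Σ_{ξ_H ∈ (S×A)^H} Q(ξ_H) · Σ_{h=1}^H r̄_{τc}(s_h, a_h)`
of a function `Q` on length-`H` trajectories. -/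
noncomputable def expReturn [Fintype S] [Fintype A] [Fintype Rw]
    (Rk : T → S → A → PMF Rw) (rval : Rw → ℝ) (τc : T) (H : ℕ)
    (Q : List (S × A) → ℝ) : ℝ :=
  ∑ v : List.Vector (S × A) H,
    Q v.toList * ((v.toList.map fun p => meanReward Rk rval τc p.1 p.2).sum)

lemma envLik_nonneg (Pk : T → S → A → PMF S) (Rk : T → S → A → PMF Rw)
    (τ : T) (D : List (Entry S A Rw)) : 0 ≤ envLik Pk Rk τ D := by
  apply List.prod_nonneg
  intro x hx
  simp only [List.mem_map] at hx
  obtain ⟨e, _, rfl⟩ := hx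
  positivity

lemma psPost_nonneg [Fintype T] (Pk : T → S → A → PMF S) (Rk : T → S → A → PMF Rw)
    (prior : PMF T) (D : List (Entry S A Rw)) (τ : T) :
    0 ≤ psPost Pk Rk prior D τ := by
  unfold psPost
  have h1 : 0 ≤ (prior τ).toReal * envLik Pk Rk τ D :=
    mul_nonneg ENNReal.toReal_nonneg (envLik_nonneg _ _ _ _)
  have h2 : 0 ≤ ∑ τ' : T, (prior τ').toReal * envLik Pk Rk τ' D :=
    Finset.sum_nonneg fun τ' _ =>
      mul_nonneg ENNReal.toReal_nonneg (envLik_nonneg _ _ _ _)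
  exact div_nonneg h1 h2

lemma histW_nonneg (πs : T → S → PMF A) (τ : T) (ξ : List (S × A)) :
    0 ≤ histW πs τ ξ := by
  apply List.prod_nonneg
  intro x hx
  simp only [List.mem_map] at hx
  obtain ⟨e, _, rfl⟩ := hx
  exact ENNReal.toReal_nonneg

lemma prod_dptM [Fintype T]
    (Pk : T → S → A → PMF S) (Rk : T → S → A → PMF Rw) (πs : T → S → PMF A)
    (prior : PMF T) (D : List (Entry S A Rw))
    (hD : 0 < ∑ τ' : T, (prior τ').toReal * envLik Pk Rk τ' D)
    (ξ : List (S × A)) :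
    (∏ i : Fin ξ.length,
        dptM Pk Rk πs prior D (ξ.take i) (ξ.get i).1 (ξ.get i).2) =
      ∑ τ : T, psPost Pk Rk prior D τ * histW πs τ ξ := by
  induction ξ using List.reverseRecOn with
  | nil =>
      simp only [List.length_nil, Finset.univ_eq_empty, Finset.prod_empty]
      simp only [histW, List.map_nil, List.prod_nil, mul_one]
      unfold psPost
      rw [← Finset.sum_div, div_self hD.ne']
  | append_singleton ζ p ih =>
      have hlen : ζ.length + 1 = (ζ ++ [p]).length := by simp
      rw [← Fin.prod_congr' _ hlen, Fin.prod_univ_castSucc]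
      have htake : ∀ i : Fin ζ.length,
          ((ζ ++ [p]).take ((Fin.cast hlen i.castSucc) : ℕ)) = ζ.take i := by
        intro i
        simp only [Fin.coe_cast, Fin.coe_castSucc]
        exact List.take_append_of_le_length i.2.le
      have hget : ∀ i : Fin ζ.length,
          (ζ ++ [p]).get (Fin.cast hlen i.castSucc) = ζ.get i := by
        intro i
        simp [List.getElem_append_left i.2]
      have hlast_take : ((ζ ++ [p]).take ((Fin.cast hlen (Fin.last ζ.length)) : ℕ)) = ζ := by
        simp [List.take_left]
      have hlast_get : (ζ ++ [p]).get (Fin.cast hlen (Fin.last ζ.length)) = p := by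
        simp [List.getElem_append_right (le_refl ζ.length)]
      rw [Finset.prod_congr rfl (fun i _ => by rw [htake i, hget i]), ih,
        hlast_take, hlast_get]
      have hW : ∀ τ, histW πs τ (ζ ++ [p]) = histW πs τ ζ * (πs τ p.1 p.2).toReal := by
        intro τ
        simp [histW]
      by_cases hz : (∑ τ : T, psPost Pk Rk prior D τ * histW πs τ ζ) = 0
      · have hzero : ∀ τ ∈ Finset.univ, psPost Pk Rk prior D τ * histW πs τ ζ = 0 := by
          intro τ _
          have := (Finset.sum_eq_zero_iff_of_nonneg (fun τ _ =>
            mul_nonneg (psPost_nonneg Pk Rk prior D τ) (histW_nonneg πs τ ζ))).mp hz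
          exact this τ (Finset.mem_univ τ)
        rw [hz, zero_mul]
        symm
        apply Finset.sum_eq_zero
        intro τ _
        rw [hW τ, ← mul_assoc, hzero τ (Finset.mem_univ τ), zero_mul]
      · unfold dptM
        rw [mul_div_assoc' _ _ _, mul_comm, mul_div_assoc, div_self hz, mul_one]
        apply Finset.sum_congr rfl
        intro τ _
        rw [hW τ, mul_assoc]

/-- **Single-episode value equivalence** (consequence of Theorem 1, used in Corollary 1).
With the convention `x / 0 = 0` in the definitions of `w` and `M`, and assuming
`Σ_{τ'} λ(τ') L_{τ'}(D) > 0`, the expected return of one episode in the test task `τ_c`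
under the DPT rollout equals that under posterior sampling:
`V(P_M(· | D, τ_c)) = V(P_ps(· | D, τ_c))`. -/
theorem dpt_ps_value_equivalence
    [Fintype T] [Nonempty T] [Fintype S] [Nonempty S] [Fintype A] [Nonempty A]
    [Fintype Rw] [Nonempty Rw]
    (Pk : T → S → A → PMF S) (Rk : T → S → A → PMF Rw) (πs : T → S → PMF A)
    (prior : PMF T) (rval : Rw → ℝ) (τc : T) (ρ : PMF S)
    (D : List (Entry S A Rw)) (H : ℕ)
    (hD : 0 < ∑ τ' : T, (prior τ').toReal * envLik Pk Rk τ' D) :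
    expReturn Rk rval τc H (trajM Pk Rk πs prior τc ρ D) =
      expReturn Rk rval τc H (trajPs Pk Rk πs prior τc ρ D) := by
  unfold expReturn
  apply Finset.sum_congr rfl
  intro v _
  congr 1
  unfold trajM trajPs
  rw [prod_dptM Pk Rk πs prior D hD]
  ring
end

section
/- (Proposition 1: maximum-likelihood concentration; Theorem 21 of Agarwal et al., stated in the paper.) For every δ ∈ (0, 1), with probability at least 1 − δ over the draw of the N i.i.d. samples (x_1, y_1), …, (x_N, y_N), every maximum-likelihood estimate f̂ ∈ F (i.e., every maximizer over f ∈ F of Σ_{i=1}^N log f(x_i)(y_i)) satisfies E_{x ~ p_X}[ (Σ_{y ∈ Y} |f̂(x)(y) − f*(x)(y)|)² ] ≤ 8 log(|F| / δ) / N. -/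
open MeasureTheory ProbabilityTheory
open scoped BigOperators ENNReal

/-- Lintegral of a product of identical coordinate functions over a finite product measure. -/
lemma mle_aux_lintegral_pi_prod {α : Type*} [MeasurableSpace α] (μ : Measure α)
    [IsProbabilityMeasure μ] (g : α → ℝ≥0∞) (hg : Measurable g) :
    ∀ n : ℕ, ∫⁻ d : Fin n → α, ∏ i, g (d i) ∂(Measure.pi fun _ => μ) = (∫⁻ a, g a ∂μ) ^ n := by
  intro n
  induction n with
  | zero =>
      simp [lintegral_const, Measure.pi_univ]
  | succ n ih =>
      set e := MeasurableEquiv.piFinSuccAbove (fun _ : Fin (n+1) => α) 0 with he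
      have hmp := measurePreserving_piFinSuccAbove (fun _ : Fin (n+1) => μ) 0
      have key : (∫⁻ d : Fin (n+1) → α, ∏ i, g (d i) ∂(Measure.pi fun _ => μ))
          = ∫⁻ z : α × (Fin n → α), ∏ i, g (e.symm z i)
              ∂(μ.prod (Measure.pi fun _ => μ)) :=
        MeasurePreserving.lintegral_map_equiv _ e.symm (MeasurePreserving.symm e hmp)
      have hz : ∀ z : α × (Fin n → α), (∏ i, g (e.symm z i)) = g z.1 * ∏ j, g (z.2 j) := by
        intro z
        rw [Fin.prod_univ_succAbove (fun i => g (e.symm z i)) 0]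
        have h0 : e.symm z 0 = z.1 := by simp [he, MeasurableEquiv.piFinSuccAbove]
        have hj : ∀ j, e.symm z (Fin.succAbove 0 j) = z.2 j := fun j => by
          simp [he, MeasurableEquiv.piFinSuccAbove]
        rw [h0]
        exact congrArg _ (Finset.prod_congr rfl fun j _ => congrArg g (hj j))
      calc (∫⁻ d : Fin (n+1) → α, ∏ i, g (d i) ∂(Measure.pi fun _ => μ))
          = ∫⁻ z : α × (Fin n → α), g z.1 * ∏ j, g (z.2 j)
              ∂(μ.prod (Measure.pi fun _ => μ)) := by
            rw [key]; exact lintegral_congr fun z => hz z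
        _ = (∫⁻ a, g a ∂μ) * ∫⁻ v : Fin n → α, ∏ j, g (v j) ∂(Measure.pi fun _ => μ) :=
            lintegral_prod_mul hg.aemeasurable
              (Finset.measurable_prod _ fun j _ =>
                hg.comp (measurable_pi_apply j)).aemeasurable
        _ = (∫⁻ a, g a ∂μ) ^ (n+1) := by rw [ih, pow_succ, mul_comm]

/-- Pointwise total-variation vs Bhattacharyya bound. -/
lemma mle_aux_tv_sq {Y : Type*} [Fintype Y] (p q : Y → ℝ) (hp0 : ∀ y, 0 ≤ p y)
    (hq0 : ∀ y, 0 ≤ q y) (hp : ∑ y, p y = 1) (hq : ∑ y, q y = 1) :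
    (∑ y, |q y - p y|) ^ 2 ≤ 8 * (1 - ∑ y, Real.sqrt (p y) * Real.sqrt (q y)) := by
  set s : Y → ℝ := fun y => Real.sqrt (p y) with hs
  set t : Y → ℝ := fun y => Real.sqrt (q y) with ht
  have hsq : ∀ y, s y ^ 2 = p y := fun y => Real.sq_sqrt (hp0 y)
  have htq : ∀ y, t y ^ 2 = q y := fun y => Real.sq_sqrt (hq0 y)
  have h1 : ∀ y, |q y - p y| = |t y - s y| * (t y + s y) := by
    intro y
    have : q y - p y = (t y - s y) * (t y + s y) := by
      nlinarith [hsq y, htq y]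
    rw [this, abs_mul, abs_of_nonneg (add_nonneg (Real.sqrt_nonneg _) (Real.sqrt_nonneg _))]
  have hCS : (∑ y, |t y - s y| * (t y + s y)) ^ 2 ≤
      (∑ y, |t y - s y| ^ 2) * ∑ y, (t y + s y) ^ 2 :=
    Finset.sum_mul_sq_le_sq_mul_sq _ _ _
  have hA : (∑ y, (t y - s y) ^ 2) = 2 - 2 * ∑ y, s y * t y := by
    have : ∀ y, (t y - s y) ^ 2 = q y + p y - 2 * (s y * t y) := by
      intro y; nlinarith [hsq y, htq y]
    simp only [this]
    rw [Finset.sum_sub_distrib, Finset.sum_add_distrib, hp, hq, ← Finset.mul_sum]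
    ring
  have hB : (∑ y, (t y + s y) ^ 2) = 2 + 2 * ∑ y, s y * t y := by
    have : ∀ y, (t y + s y) ^ 2 = q y + p y + 2 * (s y * t y) := by
      intro y; nlinarith [hsq y, htq y]
    simp only [this]
    rw [Finset.sum_add_distrib, Finset.sum_add_distrib, hp, hq, ← Finset.mul_sum]
    ring
  have habs : ∀ y, |t y - s y| ^ 2 = (t y - s y) ^ 2 := fun y => sq_abs _
  simp only [h1]
  simp only [habs, hA] at hCS
  have hAnn : 0 ≤ ∑ y, s y * t y :=
    Finset.sum_nonneg fun y _ => mul_nonneg (Real.sqrt_nonneg _) (Real.sqrt_nonneg _)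
  have hAle : ∑ y, s y * t y ≤ 1 := by
    have h0 : (0:ℝ) ≤ ∑ y, (t y - s y) ^ 2 := Finset.sum_nonneg fun y _ => sq_nonneg _
    rw [hA] at h0; linarith
  calc (∑ y, |t y - s y| * (t y + s y)) ^ 2
      ≤ (2 - 2 * ∑ y, s y * t y) * ∑ y, (t y + s y) ^ 2 := hCS
    _ = (2 - 2 * ∑ y, s y * t y) * (2 + 2 * ∑ y, s y * t y) := by rw [hB]
    _ ≤ 8 * (1 - ∑ y, s y * t y) := by nlinarith


section mleAux
set_option linter.unusedSectionVars false

variable {X : Type*} [MeasurableSpace X] {Y : Type*} [Fintype Y]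
  [MeasurableSpace Y] [MeasurableSingletonClass Y]

lemma mle_aux_meas (f : X → PMF Y) (h : ∀ y, Measurable fun x => f x y) :
    Measurable fun p : X × Y => (f p.1 p.2 : ℝ≥0∞) := by
  classical
  have hrw : (fun p : X × Y => (f p.1 p.2 : ℝ≥0∞))
      = fun p => ∑ y, if p.2 = y then f p.1 y else 0 := by
    funext p; rw [Finset.sum_ite_eq]; simp
  rw [hrw]
  refine Finset.measurable_sum _ fun y _ => Measurable.ite ?_ ((h y).comp measurable_fst)
    measurable_const
  exact measurable_snd (measurableSet_singleton y)

lemma mle_aux_sum_toReal (p : PMF Y) : ∑ y, (p y).toReal = 1 := by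
  have h1 : ∑ y, p y = 1 := by rw [← tsum_fintype (L := .unconditional _)]; exact p.tsum_coe
  rw [← ENNReal.toReal_sum fun y _ => p.apply_ne_top y, h1, ENNReal.toReal_one]

lemma mle_aux_toReal_le_one (p : PMF Y) (y : Y) : (p y).toReal ≤ 1 := by
  have := ENNReal.toReal_mono ENNReal.one_ne_top (p.coe_le_one y)
  simpa using this

lemma mle_aux_term (b c : ℝ≥0∞) (hb : b ≠ ∞) (hc : c ≠ ∞) :
    (c / b) ^ (1/2 : ℝ) * b ≤ ENNReal.ofReal (Real.sqrt b.toReal * Real.sqrt c.toReal) := by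
  rcases eq_or_ne b 0 with hb0 | hb0
  · simp [hb0]
  have hgoal : (c / b) ^ (1/2 : ℝ) * b = ENNReal.ofReal (Real.sqrt b.toReal * Real.sqrt c.toReal) := by
    have hbh0 : b ^ (1/2 : ℝ) ≠ 0 := by
      simp [ENNReal.rpow_eq_zero_iff, hb0, hb]
    have hbht : b ^ (1/2 : ℝ) ≠ ∞ := ENNReal.rpow_ne_top_of_nonneg (by norm_num) hb
    have hsplit : b = b ^ (1/2 : ℝ) * b ^ (1/2 : ℝ) := by
      rw [← ENNReal.rpow_add _ _ hb0 hb]; norm_num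
    have h2 : (b ^ (1/2:ℝ))⁻¹ * b = b ^ (1/2:ℝ) :=
      calc (b ^ (1/2:ℝ))⁻¹ * b
          = (b ^ (1/2:ℝ))⁻¹ * (b ^ (1/2:ℝ) * b ^ (1/2:ℝ)) := by rw [← hsplit]
        _ = b ^ (1/2:ℝ) := by rw [← mul_assoc, ENNReal.inv_mul_cancel hbh0 hbht, one_mul]
    have key : (c / b) ^ (1/2 : ℝ) * b = c ^ (1/2 : ℝ) * b ^ (1/2 : ℝ) := by
      rw [div_eq_mul_inv, ENNReal.mul_rpow_of_nonneg _ _ (by norm_num : (0:ℝ) ≤ 1/2),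
        ENNReal.inv_rpow, mul_assoc, h2]
    rw [key]
    have hcast : ∀ x : ℝ≥0∞, x ≠ ∞ → x ^ (1/2 : ℝ) = ENNReal.ofReal (Real.sqrt x.toReal) := by
      intro x hx
      conv_lhs => rw [← ENNReal.ofReal_toReal hx]
      rw [ENNReal.ofReal_rpow_of_nonneg ENNReal.toReal_nonneg (by norm_num),
        ← Real.sqrt_eq_rpow]
    rw [hcast c hc, hcast b hb, ← ENNReal.ofReal_mul (Real.sqrt_nonneg _), mul_comm]
  exact le_of_eq hgoal

end mleAux
section mleAux2
set_option linter.unusedSectionVars false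

variable {X : Type*} [MeasurableSpace X] {Y : Type*} [Fintype Y]
  [MeasurableSpace Y] [MeasurableSingletonClass Y]

lemma mle_aux_A_meas (fstar f : X → PMF Y) (hf : ∀ y, Measurable fun x => f x y)
    (hfs : ∀ y, Measurable fun x => fstar x y) :
    Measurable fun x => ∑ y, Real.sqrt ((fstar x y).toReal) * Real.sqrt ((f x y).toReal) :=
  Finset.measurable_sum _ fun y _ =>
    (Real.continuous_sqrt.measurable.comp (hfs y).ennreal_toReal).mul
      (Real.continuous_sqrt.measurable.comp (hf y).ennreal_toReal)

lemma mle_aux_A_nonneg (fstar f : X → PMF Y) (x : X) :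
    0 ≤ ∑ y, Real.sqrt ((fstar x y).toReal) * Real.sqrt ((f x y).toReal) :=
  Finset.sum_nonneg fun y _ => mul_nonneg (Real.sqrt_nonneg _) (Real.sqrt_nonneg _)

lemma mle_aux_A_int (pX : Measure X) [IsProbabilityMeasure pX] (fstar f : X → PMF Y)
    (hf : ∀ y, Measurable fun x => f x y) (hfs : ∀ y, Measurable fun x => fstar x y) :
    Integrable (fun x => ∑ y, Real.sqrt ((fstar x y).toReal) * Real.sqrt ((f x y).toReal)) pX := by
  refine Integrable.mono' (integrable_const (Fintype.card Y : ℝ))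
    (mle_aux_A_meas fstar f hf hfs).aestronglyMeasurable (ae_of_all _ fun x => ?_)
  rw [Real.norm_eq_abs, abs_of_nonneg (mle_aux_A_nonneg fstar f x)]
  calc ∑ y, Real.sqrt ((fstar x y).toReal) * Real.sqrt ((f x y).toReal)
      ≤ ∑ _y : Y, (1:ℝ) := Finset.sum_le_sum fun y _ =>
        mul_le_one₀ (Real.sqrt_le_one.mpr (mle_aux_toReal_le_one _ y)) (Real.sqrt_nonneg _)
          (Real.sqrt_le_one.mpr (mle_aux_toReal_le_one _ y))
    _ = Fintype.card Y := by simp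
lemma mle_aux_single (pX : Measure X) [IsProbabilityMeasure pX] (fstar f : X → PMF Y)
    (hf : ∀ y, Measurable fun x => f x y) (hfs : ∀ y, Measurable fun x => fstar x y)
    (κ : Kernel X Y) [IsMarkovKernel κ] (hκ : ∀ x, κ x = (fstar x).toMeasure) :
    ∫⁻ p : X × Y, (f p.1 p.2 / fstar p.1 p.2) ^ (1/2:ℝ) ∂(pX.compProd κ) ≤
      ENNReal.ofReal
        (∫ x, ∑ y, Real.sqrt ((fstar x y).toReal) * Real.sqrt ((f x y).toReal) ∂pX) := by
  have hg : Measurable fun p : X × Y => (f p.1 p.2 / fstar p.1 p.2) ^ (1/2:ℝ) :=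
    ((mle_aux_meas f hf).div (mle_aux_meas fstar hfs)).pow measurable_const
  rw [Measure.lintegral_compProd hg]
  calc ∫⁻ x, ∫⁻ y, (f x y / fstar x y) ^ (1/2:ℝ) ∂(κ x) ∂pX
      ≤ ∫⁻ x, ENNReal.ofReal
          (∑ y, Real.sqrt ((fstar x y).toReal) * Real.sqrt ((f x y).toReal)) ∂pX := by
        refine lintegral_mono fun x => ?_
        rw [hκ x, lintegral_countable', tsum_fintype,
          ENNReal.ofReal_sum_of_nonneg fun y _ =>
            mul_nonneg (Real.sqrt_nonneg _) (Real.sqrt_nonneg _)]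
        refine Finset.sum_le_sum fun y _ => ?_
        rw [PMF.toMeasure_apply_singleton _ y (measurableSet_singleton y)]
        exact mle_aux_term _ _ (PMF.apply_ne_top _ _) (PMF.apply_ne_top _ _)
    _ = ENNReal.ofReal
          (∫ x, ∑ y, Real.sqrt ((fstar x y).toReal) * Real.sqrt ((f x y).toReal) ∂pX) :=
        (ofReal_integral_eq_lintegral_ofReal (mle_aux_A_int pX fstar f hf hfs)
          (ae_of_all _ fun x => mle_aux_A_nonneg fstar f x)).symm

lemma mle_aux_T (pX : Measure X) [IsProbabilityMeasure pX] (fstar f : X → PMF Y)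
    (hf : ∀ y, Measurable fun x => f x y) (hfs : ∀ y, Measurable fun x => fstar x y) :
    ∫ x, (∑ y, |(f x y).toReal - (fstar x y).toReal|) ^ 2 ∂pX ≤
      8 * (1 - ∫ x, ∑ y, Real.sqrt ((fstar x y).toReal) * Real.sqrt ((f x y).toReal) ∂pX) := by
  have hmeasT : Measurable fun x => (∑ y, |(f x y).toReal - (fstar x y).toReal|) ^ 2 :=
    (Finset.measurable_sum _ fun y _ =>
      ((hf y).ennreal_toReal.sub (hfs y).ennreal_toReal).abs).pow_const 2
  have hnn : ∀ x, (0:ℝ) ≤ ∑ y, |(f x y).toReal - (fstar x y).toReal| :=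
    fun x => Finset.sum_nonneg fun y _ => abs_nonneg _
  have hintT : Integrable (fun x => (∑ y, |(f x y).toReal - (fstar x y).toReal|) ^ 2) pX := by
    refine Integrable.mono' (integrable_const ((Fintype.card Y : ℝ) ^ 2))
      hmeasT.aestronglyMeasurable (ae_of_all _ fun x => ?_)
    rw [Real.norm_eq_abs, abs_of_nonneg (pow_nonneg (hnn x) 2)]
    refine pow_le_pow_left₀ (hnn x) ?_ 2
    calc ∑ y, |(f x y).toReal - (fstar x y).toReal| ≤ ∑ _y : Y, (1:ℝ) := by
          refine Finset.sum_le_sum fun y _ => ?_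
          rw [abs_sub_le_iff]
          constructor
          · have h1 := mle_aux_toReal_le_one (f x) y
            have h2 := ENNReal.toReal_nonneg (a := fstar x y)
            linarith
          · have h1 := mle_aux_toReal_le_one (fstar x) y
            have h2 := ENNReal.toReal_nonneg (a := f x y)
            linarith
      _ = Fintype.card Y := by simp
  have hintA := mle_aux_A_int pX fstar f hf hfs
  have hint2 : Integrable (fun x =>
      8 * (1 - ∑ y, Real.sqrt ((fstar x y).toReal) * Real.sqrt ((f x y).toReal))) pX :=
    ((integrable_const (1:ℝ)).sub hintA).const_mul 8
  calc ∫ x, (∑ y, |(f x y).toReal - (fstar x y).toReal|) ^ 2 ∂pX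
      ≤ ∫ x, 8 * (1 - ∑ y, Real.sqrt ((fstar x y).toReal) * Real.sqrt ((f x y).toReal)) ∂pX := by
        refine integral_mono hintT hint2 fun x => ?_
        exact mle_aux_tv_sq (fun y => (fstar x y).toReal) (fun y => (f x y).toReal)
          (fun y => ENNReal.toReal_nonneg) (fun y => ENNReal.toReal_nonneg)
          (mle_aux_sum_toReal (fstar x)) (mle_aux_sum_toReal (f x))
    _ = 8 * (1 - ∫ x, ∑ y, Real.sqrt ((fstar x y).toReal) * Real.sqrt ((f x y).toReal) ∂pX) := by
        rw [integral_const_mul, integral_sub (integrable_const 1) hintA, integral_const]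
        simp


end mleAux2
/-- **Proposition 1 (maximum-likelihood concentration; Theorem 21 of Agarwal et al.).**
Let `F` be a nonempty finite class of proper conditional distributions `f : X → PMF Y`
(each coordinate measurable), realizable via `f* ∈ F`, and let the `N` samples
`(x_i, y_i)` be i.i.d. with `x_i ~ p_X` and `y_i ~ f*(x_i)` (i.e., each sample is drawn
from `p_X ⊗ₘ κ` where `κ x = f*(x)`). Then for every `δ ∈ (0, 1)`, with probability at
least `1 − δ`, every maximum-likelihood estimate `f̂ ∈ F` (every maximizer of the
likelihood `∏ᵢ f(x_i)(y_i)`, equivalently of `Σᵢ log f(x_i)(y_i)`) satisfies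
`E_{x ~ p_X}[(Σ_y |f̂(x)(y) − f*(x)(y)|)²] ≤ 8 log(|F| / δ) / N`. -/
theorem mle_concentration
    {X : Type*} [MeasurableSpace X] {Y : Type*} [Fintype Y] [Nonempty Y]
    [MeasurableSpace Y] [MeasurableSingletonClass Y]
    (pX : Measure X) [IsProbabilityMeasure pX]
    (F : Finset (X → PMF Y)) (hF : F.Nonempty)
    (hmeas : ∀ f ∈ F, ∀ y : Y, Measurable fun x => f x y)
    (fstar : X → PMF Y) (hfstar : fstar ∈ F)
    (κ : Kernel X Y) [IsMarkovKernel κ] (hκ : ∀ x : X, κ x = (fstar x).toMeasure)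
    (N : ℕ) (hN : 1 ≤ N) (δ : ℝ) (hδ : δ ∈ Set.Ioo (0 : ℝ) 1) :
    ENNReal.ofReal (1 - δ) ≤
      (Measure.pi fun _ : Fin N => pX.compProd κ)
        {d : Fin N → X × Y |
          ∀ fhat ∈ F,
            (∀ f ∈ F, ∏ i : Fin N, f (d i).1 (d i).2 ≤ ∏ i : Fin N, fhat (d i).1 (d i).2) →
            ∫ x, (∑ y : Y, |(fhat x y).toReal - (fstar x y).toReal|) ^ 2 ∂pX ≤
              8 * Real.log (F.card / δ) / N} := by
  classical
  obtain ⟨hδ0, hδ1⟩ := hδ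
  have hcard : 0 < (F.card : ℝ) := by exact_mod_cast Finset.card_pos.mpr hF
  have hNR : (0:ℝ) < N := by exact_mod_cast hN
  set ν : Measure (X × Y) := pX.compProd κ with hν
  set μpi : Measure (Fin N → X × Y) := Measure.pi fun _ : Fin N => ν with hμpi
  set B : ℝ := 8 * Real.log (F.card / δ) / N with hB
  set T : (X → PMF Y) → ℝ :=
    fun f => ∫ x, (∑ y : Y, |(f x y).toReal - (fstar x y).toReal|) ^ 2 ∂pX with hT
  set a : (X → PMF Y) → ℝ :=
    fun f => ∫ x, ∑ y, Real.sqrt ((fstar x y).toReal) * Real.sqrt ((f x y).toReal) ∂pX with ha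
  set g : (X → PMF Y) → X × Y → ℝ≥0∞ :=
    fun f p => (f p.1 p.2 / fstar p.1 p.2) ^ (1/2:ℝ) with hg
  set Z : (X → PMF Y) → (Fin N → X × Y) → ℝ≥0∞ :=
    fun f d => ∏ i, g f (d i) with hZ
  set S : Set (Fin N → X × Y) :=
    {d : Fin N → X × Y |
      ∀ fhat ∈ F,
        (∀ f ∈ F, ∏ i : Fin N, f (d i).1 (d i).2 ≤ ∏ i : Fin N, fhat (d i).1 (d i).2) →
        T fhat ≤ B} with hS
  show ENNReal.ofReal (1 - δ) ≤ μpi S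
  have hgm : ∀ f ∈ F, Measurable (g f) := fun f hf =>
    ((mle_aux_meas f (hmeas f hf)).div (mle_aux_meas fstar (hmeas fstar hfstar))).pow
      measurable_const
  have hZm : ∀ f ∈ F, Measurable (Z f) := fun f hf =>
    Finset.measurable_prod _ fun i _ => (hgm f hf).comp (measurable_pi_apply i)
  have ha0 : ∀ f, 0 ≤ a f := fun f =>
    integral_nonneg fun x => mle_aux_A_nonneg fstar f x
  have hTle : ∀ f ∈ F, T f ≤ 8 * (1 - a f) := fun f hf =>
    mle_aux_T pX fstar f (hmeas f hf) (hmeas fstar hfstar)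
  -- bound on bad events
  have hbad : ∀ f ∈ F, ¬ T f ≤ B → μpi {d | 1 ≤ Z f d} ≤ ENNReal.ofReal (δ / F.card) := by
    intro f hf hTf
    have h1 : μpi {d | 1 ≤ Z f d} ≤ ∫⁻ d, Z f d ∂μpi := by
      have := mul_meas_ge_le_lintegral₀ (μ := μpi) (hZm f hf).aemeasurable 1
      simpa using this
    set c : ℝ := Real.log (F.card / δ) / N with hc
    have hcN : c * N = Real.log (F.card / δ) := div_mul_cancel₀ _ (ne_of_gt hNR)
    have haf : a f < 1 - c := by
      have h8 : B = 8 * c := by rw [hB, hc]; ring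
      have := hTle f hf
      have := not_le.mp hTf
      linarith [hTle f hf, not_le.mp hTf]
    have h1c : 0 < 1 - c := lt_of_le_of_lt (ha0 f) haf
    have hu : (0:ℝ) < F.card / δ := div_pos hcard hδ0
    have hpow : a f ^ N ≤ δ / F.card := by
      calc a f ^ N ≤ (1 - c) ^ N := pow_le_pow_left₀ (ha0 f) haf.le N
        _ ≤ Real.exp (-c) ^ N := pow_le_pow_left₀ h1c.le
            (by linarith [Real.add_one_le_exp (-c)]) N
        _ = Real.exp (-(c * N)) :=
            (Real.exp_nat_mul (-c) N).symm.trans (congrArg Real.exp (by ring))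
        _ = (F.card / δ)⁻¹ := by rw [hcN, Real.exp_neg, Real.exp_log hu]
        _ = δ / F.card := by rw [inv_div]
    calc μpi {d | 1 ≤ Z f d}
        ≤ (∫⁻ p, g f p ∂ν) ^ N :=
          h1.trans_eq (mle_aux_lintegral_pi_prod ν (g f) (hgm f hf) N)
      _ ≤ (ENNReal.ofReal (a f)) ^ N := pow_le_pow_left'
          (mle_aux_single pX fstar f (hmeas f hf) (hmeas fstar hfstar) κ hκ) N
      _ = ENNReal.ofReal (a f ^ N) := (ENNReal.ofReal_pow (ha0 f) N).symm
      _ ≤ ENNReal.ofReal (δ / F.card) := ENNReal.ofReal_le_ofReal hpow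
  -- the null event
  have hE0 : μpi {d : Fin N → X × Y | ∃ i, fstar (d i).1 (d i).2 = 0} = 0 := by
    have hEsm : MeasurableSet {p : X × Y | fstar p.1 p.2 = 0} :=
      mle_aux_meas fstar (hmeas fstar hfstar) (measurableSet_singleton 0)
    have hEs : ν {p : X × Y | fstar p.1 p.2 = 0} = 0 := by
      rw [hν, Measure.compProd_apply hEsm]
      have hz : ∀ x, κ x {y : Y | fstar x y = 0} = 0 := by
        intro x
        rw [hκ x]
        refine (PMF.toMeasure_apply_eq_zero_iff _ (hs := (Set.to_countable _).measurableSet)).mpr ?_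
        rw [Set.disjoint_left]
        intro y hy hy'
        exact (PMF.mem_support_iff _ y).mp hy hy'
      simp only [Set.preimage_setOf_eq]
      simp [hz]
    have hrw : {d : Fin N → X × Y | ∃ i, fstar (d i).1 (d i).2 = 0}
        = ⋃ i, Function.eval i ⁻¹' {p : X × Y | fstar p.1 p.2 = 0} := by
      ext d; simp [Function.eval]
    rw [hrw]
    exact measure_iUnion_null fun i =>
      Measure.pi_eval_preimage_null (μ := fun _ : Fin N => ν) (i := i) hEs
  -- inclusion of the complement
  have hsub : Sᶜ ⊆ {d : Fin N → X × Y | ∃ i, fstar (d i).1 (d i).2 = 0}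
      ∪ ⋃ f ∈ F, {d | ¬ T f ≤ B ∧ 1 ≤ Z f d} := by
    intro d hd
    simp only [hS, Set.mem_compl_iff, Set.mem_setOf_eq] at hd
    push_neg at hd
    obtain ⟨fhat, hfhatF, hml, hTf⟩ := hd
    by_cases h0 : ∃ i, fstar (d i).1 (d i).2 = 0
    · exact Or.inl h0
    · push_neg at h0
      refine Or.inr (Set.mem_biUnion hfhatF ⟨not_le.mpr hTf, ?_⟩)
      have hbt : ∀ i : Fin N, fstar (d i).1 (d i).2 ≠ ∞ := fun i => PMF.apply_ne_top _ _
      have hprodb0 : (∏ i, fstar (d i).1 (d i).2) ≠ 0 :=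
        Finset.prod_ne_zero_iff.mpr fun i _ => h0 i
      have hprodbt : (∏ i, fstar (d i).1 (d i).2) ≠ ∞ :=
        (ENNReal.prod_lt_top fun i _ => (hbt i).lt_top).ne
      have hcancel : (∏ i, fstar (d i).1 (d i).2) *
          ∏ i, fhat (d i).1 (d i).2 / fstar (d i).1 (d i).2
          = ∏ i, fhat (d i).1 (d i).2 := by
        rw [← Finset.prod_mul_distrib]
        exact Finset.prod_congr rfl fun i _ =>
          ENNReal.mul_div_cancel (h0 i) (hbt i)
      have h1 : 1 ≤ ∏ i, fhat (d i).1 (d i).2 / fstar (d i).1 (d i).2 := by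
        refine (ENNReal.mul_le_mul_iff_right hprodb0 hprodbt).mp ?_
        rw [mul_one, hcancel]
        exact hml fstar hfstar
      calc (1:ℝ≥0∞) = 1 ^ (1/2:ℝ) := (ENNReal.one_rpow _).symm
        _ ≤ (∏ i, fhat (d i).1 (d i).2 / fstar (d i).1 (d i).2) ^ (1/2:ℝ) :=
            ENNReal.rpow_le_rpow h1 (by norm_num)
        _ = Z fhat d := (ENNReal.prod_rpow_of_nonneg (by norm_num)).symm
  -- union bound
  have hScompl : μpi Sᶜ ≤ ENNReal.ofReal δ := by
    refine (measure_mono hsub).trans ((measure_union_le _ _).trans ?_)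
    rw [hE0, zero_add]
    refine (measure_biUnion_finset_le F _).trans ?_
    have hterm : ∀ f ∈ F, μpi {d | ¬ T f ≤ B ∧ 1 ≤ Z f d} ≤ ENNReal.ofReal (δ / F.card) := by
      intro f hf
      by_cases hTf : T f ≤ B
      · have hz0 : μpi {d | ¬ T f ≤ B ∧ 1 ≤ Z f d} = 0 :=
          measure_mono_null (fun d hd => (hd.1 hTf).elim) measure_empty
        exact le_of_eq_of_le hz0 zero_le
      · exact (measure_mono fun d hd => hd.2).trans (hbad f hf hTf)
    calc ∑ f ∈ F, μpi {d | ¬ T f ≤ B ∧ 1 ≤ Z f d}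
        ≤ ∑ _f ∈ F, ENNReal.ofReal (δ / F.card) := Finset.sum_le_sum hterm
      _ = (F.card : ℝ≥0∞) * ENNReal.ofReal (δ / F.card) := by
          rw [Finset.sum_const, nsmul_eq_mul]
      _ = ENNReal.ofReal δ := by
          rw [← ENNReal.ofReal_natCast F.card,
            ← ENNReal.ofReal_mul (Nat.cast_nonneg _)]
          congr 1
          rw [mul_comm, div_mul_cancel₀ _ (ne_of_gt hcard)]
  have huniv : (1:ℝ≥0∞) ≤ μpi S + ENNReal.ofReal δ := by
    have hle : μpi (S ∪ Sᶜ) ≤ μpi S + μpi Sᶜ := measure_union_le _ _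
    rw [Set.union_compl_self, measure_univ] at hle
    exact hle.trans (add_le_add_right hScompl _)
  calc ENNReal.ofReal (1 - δ) = 1 - ENNReal.ofReal δ := by
        rw [ENNReal.ofReal_sub _ hδ0.le, ENNReal.ofReal_one]
    _ ≤ μpi S := tsub_le_iff_right.mpr huniv
end
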